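/- In the universe of bipartitions of a finite pixel set Π with a submodular order function, every F-tangle of S_k is a k-profile, where F is the set of all void stars with at most 3 elements together with all single pixels. -/

import Mathlib

section
variable {P : Type*}

/-- The separations of order `< k` in the universe of subsets of the pixel set. -/
def Sk (ord : Set P → ℝ) (k : ℝ) : Set (Set P) := {A | ord A < k}

/-- `O` is an orientation of `S_k`: it contains exactly one of `A`, `Aᶜ` for every
separation `A` of order `< k`. -/
def IsOrientationSk (ord : Set P → ℝ) (k : ℝ) (O : Set (Set P)) : Prop :=
  O ⊆ Sk ord k ∧ ∀ A : Set P, ord A < k → Xor' (A ∈ O) (Aᶜ ∈ O)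

/-- `O` is consistent (w.r.t. the ordering `A ≤ B :⇔ A ⊇ B` and involution `A ↦ Aᶜ`):
there are no distinct unoriented separations with orientations `B ⊂ A` such that
`Aᶜ ∈ O` and `B ∈ O`. -/
def ConsistentSk (O : Set (Set P)) : Prop :=
  ¬ ∃ A B : Set P, ({A, Aᶜ} : Set (Set P)) ≠ {B, Bᶜ} ∧ B ⊂ A ∧ Aᶜ ∈ O ∧ B ∈ O

/-- A `k`-profile: a consistent orientation of `S_k` satisfying the profile condition
(P): for all `A, B ∈ P`, `(A ∩ B)ᶜ ∉ P`. -/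
def IsKProfile (ord : Set P → ℝ) (k : ℝ) (O : Set (Set P)) : Prop :=
  IsOrientationSk ord k O ∧ ConsistentSk O ∧ ∀ A ∈ O, ∀ B ∈ O, (A ∩ B)ᶜ ∉ O

/-- A star of separations: its elements point towards each other
(`A ≤ Bᶜ`, i.e. `Bᶜ ⊆ A`, for distinct `A, B`). -/
def IsStarSet (σ : Set (Set P)) : Prop :=
  ∀ A ∈ σ, ∀ B ∈ σ, A ≠ B → Bᶜ ⊆ A

/-- `σ` belongs to `F`: it is a void star with at most 3 elements, or a single pixel. -/
def InF (σ : Set (Set P)) : Prop :=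
  (IsStarSet σ ∧ σ.ncard ≤ 3 ∧ ⋂₀ σ = ∅) ∨ ∃ p : P, σ = {{p}}

/-- An `F`-tangle of `S_k`: a consistent orientation of `S_k` with no subset in `F`. -/
def IsFTangle (ord : Set P → ℝ) (k : ℝ) (O : Set (Set P)) : Prop :=
  IsOrientationSk ord k O ∧ ConsistentSk O ∧ ∀ σ ⊆ O, ¬ InF σ

end

section Aux
variable {P : Type*}

lemma empty_not_mem {ord : Set P → ℝ} {k : ℝ} {O : Set (Set P)}
    (hO : IsFTangle ord k O) : (∅ : Set P) ∉ O := by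
  intro h
  refine hO.2.2 {∅} (by simpa using h) (Or.inl ⟨?_, ?_, ?_⟩)
  · intro A hA B hB hne
    simp only [Set.mem_singleton_iff] at hA hB
    exact absurd (hA.trans hB.symm) hne
  · simp
  · simp

lemma key_lemma {ord : Set P → ℝ} {k : ℝ} {O : Set (Set P)}
    (hO : IsFTangle ord k O) (A B : Set P)
    (hA : A ∈ O) (hB : B ∈ O) (hC : (A ∩ B)ᶜ ∈ O)
    (hord : ord (A ∩ Bᶜ) < k) : False := by
  rcases hO.1.2 (A ∩ Bᶜ) hord with ⟨hD, _⟩ | ⟨hDc, _⟩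
  · -- A ∩ Bᶜ ∈ O : contradicts consistency with B ∈ O
    by_cases heq : A ∩ Bᶜ = Bᶜ
    · -- Bᶜ ∈ O and B ∈ O
      rw [heq] at hD
      have hkB : ord B < k := hO.1.1 hB
      rcases hO.1.2 B hkB with ⟨_, h2⟩ | ⟨_, h2⟩
      · exact h2 hD
      · exact h2 hB
    · by_cases hBempty : A ∩ Bᶜ = B
      · have hBsub : B ⊆ Bᶜ := le_of_eq_of_le hBempty.symm Set.inter_subset_right
        have : B = ∅ := by
          ext x; simp only [Set.mem_empty_iff_false, iff_false]
          intro hx; exact hBsub hx hx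
        exact empty_not_mem hO (this ▸ hB)
      · refine hO.2.1 ⟨Bᶜ, A ∩ Bᶜ, ?_, ?_, ?_, hD⟩
        · intro h
          have : Bᶜ ∈ ({A ∩ Bᶜ, (A ∩ Bᶜ)ᶜ} : Set (Set P)) := by
            rw [← h]; exact Set.mem_insert _ _
          rcases this with h' | h'
          · exact heq h'.symm
          · apply hBempty
            simp only [Set.mem_singleton_iff] at h'
            have := congrArg compl h'
            simpa using this.symm
        · exact ⟨Set.inter_subset_right, fun hcon => heq (le_antisymm Set.inter_subset_right hcon)⟩
        · simpa using hB
  · -- (A ∩ Bᶜ)ᶜ = Aᶜ ∪ B ∈ O : void star {A, (A ∩ Bᶜ)ᶜ, (A ∩ B)ᶜ}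
    set σ : Set (Set P) := {A, (A ∩ Bᶜ)ᶜ, (A ∩ B)ᶜ} with hσ
    refine hO.2.2 σ ?_ (Or.inl ⟨?_, ?_, ?_⟩)
    · intro X hX
      rcases hX with h | h | h
      · exact h ▸ hA
      · exact h ▸ hDc
      · simp only [Set.mem_singleton_iff] at h; exact h ▸ hC
    · intro X hX Y hY hne
      rcases hX with hX | hX | hX <;> rcases hY with hY | hY | hY <;>
        simp -failIfUnchanged only [Set.mem_singleton_iff] at * <;> subst hX <;> subst hY <;>
        first
        | exact absurd rfl hne
        | (intro x hx; simp only [Set.mem_compl_iff, Set.mem_inter_iff, Set.mem_union,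
            not_and, not_not, compl_compl, Set.compl_union] at *; tauto)
    · calc σ.ncard ≤ ({(A ∩ Bᶜ)ᶜ, (A ∩ B)ᶜ} : Set (Set P)).ncard + 1 :=
            Set.ncard_insert_le _ _
        _ ≤ (({(A ∩ B)ᶜ} : Set (Set P)).ncard + 1) + 1 := by
            exact Nat.add_le_add_right (Set.ncard_insert_le _ _) 1
        _ ≤ 3 := by simp
    · rw [hσ]
      ext x
      simp only [Set.sInter_insert, Set.sInter_singleton, Set.mem_inter_iff,
        Set.mem_compl_iff, Set.mem_inter_iff, Set.mem_empty_iff_false, iff_false,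
        not_and, not_not]
      tauto

end Aux

/-- In the universe of bipartitions of a finite pixel set with a submodular order
function, every `F`-tangle of `S_k` is a `k`-profile. -/
theorem ftangle_is_kprofile {P : Type*} [Finite P] [Nonempty P]
    (ord : Set P → ℝ) (k : ℝ)
    (hnonneg : ∀ A : Set P, 0 ≤ ord A)
    (hsym : ∀ A : Set P, ord A = ord Aᶜ)
    (hsub : ∀ A B : Set P, ord (A ∩ B) + ord (A ∪ B) ≤ ord A + ord B)
    (O : Set (Set P)) (hO : IsFTangle ord k O) :
    IsKProfile ord k O := by
  refine ⟨hO.1, hO.2.1, ?_⟩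
  intro A hA B hB hC
  have hkA : ord A < k := hO.1.1 hA
  have hkB : ord B < k := hO.1.1 hB
  have hsubAB := hsub A Bᶜ
  rw [← hsym B] at hsubAB
  have hmin : ord (A ∩ Bᶜ) < k ∨ ord (A ∪ Bᶜ) < k := by
    by_contra h
    push_neg at h
    linarith
  rcases hmin with h | h
  · exact key_lemma hO A B hA hB hC h
  · have h' : ord (B ∩ Aᶜ) < k := by
      have : (A ∪ Bᶜ)ᶜ = B ∩ Aᶜ := by
        rw [Set.compl_union, compl_compl, Set.inter_comm]
      rw [hsym (A ∪ Bᶜ), this] at h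
      exact h
    rw [Set.inter_comm] at hC
    exact key_lemma hO B A hB hA hC h'
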